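/- Let n and k be positive integers and let V ⊆ ℝ^n be a linear subspace of dimension k. Then the number of points of {−1/√n, 1/√n}^n lying in V is at most 2^k: |V ∩ {−1/√n, 1/√n}^n| ≤ 2^k. -/

import Mathlib

/-- Odlyzko's lemma: a k-dimensional linear subspace of ℝ^n contains at most 2^k points of
the scaled hypercube {−1/√n, 1/√n}^n. -/
theorem stmt18 (n k : ℕ) (hn : 0 < n) (hk : 0 < k)
    (V : Submodule ℝ (Fin n → ℝ)) (hdim : Module.finrank ℝ V = k) :
    Set.ncard ((V : Set (Fin n → ℝ)) ∩
        {X : Fin n → ℝ | ∀ i, X i = 1 / Real.sqrt n ∨ X i = -(1 / Real.sqrt n)}) ≤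
      2 ^ k := by
  classical
  set c : ℝ := 1 / Real.sqrt n with hc
  have hcpos : 0 < c := by
    have : (0:ℝ) < Real.sqrt n := Real.sqrt_pos.mpr (by exact_mod_cast hn)
    positivity
  -- coordinate functionals on V
  set coords : Fin n → Module.Dual ℝ V :=
    fun i => (LinearMap.proj i).comp V.subtype with hcoords
  have hspan : Submodule.span ℝ (Set.range coords) = ⊤ := by
    have hsurj : Function.Surjective (V.subtype.dualMap) :=
      LinearMap.dualMap_surjective_of_injective V.injective_subtype
    have hb : Submodule.span ℝ
        (Set.range fun i => ((Pi.basisFun ℝ (Fin n)).dualBasis i)) = ⊤ :=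
      (Pi.basisFun ℝ (Fin n)).dualBasis.span_eq
    have hrange : Set.range coords =
        V.subtype.dualMap '' (Set.range fun i => ((Pi.basisFun ℝ (Fin n)).dualBasis i)) := by
      rw [← Set.range_comp]
      apply congrArg
      funext i
      ext x
      simp [coords, Pi.basisFun_repr, LinearMap.dualMap_apply]
    rw [hrange, Submodule.span_image, hb, Submodule.map_top, LinearMap.range_eq_top.mpr hsurj]
  obtain ⟨t, hts, hspan', hli⟩ := exists_linearIndependent ℝ (Set.range coords)
  rw [hspan] at hspan'
  haveI : FiniteDimensional ℝ V := FiniteDimensional.finiteDimensional_submodule V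
  have htfin : t.Finite := hli.setFinite
  haveI := htfin.fintype
  have b : Module.Basis t ℝ (Module.Dual ℝ V) :=
    Module.Basis.mk hli (by rw [Subtype.range_coe, hspan'])
  have hcard : Fintype.card t = k := by
    have h1 : Module.finrank ℝ (Module.Dual ℝ V) = Fintype.card t :=
      Module.finrank_eq_card_basis b
    rw [Subspace.dual_finrank_eq, hdim] at h1
    omega
  -- the injection
  set S := ((V : Set (Fin n → ℝ)) ∩
      {X : Fin n → ℝ | ∀ i, X i = c ∨ X i = -c}) with hS
  have key : Nat.card S ≤ 2 ^ k := by
    set F : S → (t → Bool) := (fun x φ =>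
      decide (φ.1 ⟨x.1, x.2.1⟩ = c)) with hF
    have hFinj : Function.Injective F := by
      intro x y hxy
      set xv : V := ⟨x.1, x.2.1⟩ with hxv
      set yv : V := ⟨y.1, y.2.1⟩ with hyv
      have hval : ∀ φ ∈ t, φ xv = φ yv := by
        intro φ hφ
        obtain ⟨i, hi⟩ := hts hφ
        have hxφ : φ xv = x.1 i := by rw [← hi]; rfl
        have hyφ : φ yv = y.1 i := by rw [← hi]; rfl
        have hiff : φ xv = c ↔ φ yv = c := by
          have h := congrFun hxy ⟨φ, hφ⟩
          rw [hF] at h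
          simpa only [decide_eq_decide] using h
        rcases x.2.2 i with h1 | h1 <;> rcases y.2.2 i with h2 | h2
        · rw [hxφ, hyφ, h1, h2]
        · exfalso
          rw [hxφ, h1, hyφ, h2] at hiff
          have := hiff.mp rfl
          linarith
        · exfalso
          rw [hxφ, h1, hyφ, h2] at hiff
          have := hiff.mpr rfl
          linarith
        · rw [hxφ, hyφ, h1, h2]
      have hall : ∀ ψ ∈ Submodule.span ℝ t, ψ (xv - yv) = 0 := by
        intro ψ hmem
        induction hmem using Submodule.span_induction with
        | mem z hz => simp [map_sub, hval z hz]
        | zero => simp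
        | add a b _ _ ha hb =>
            simp only [LinearMap.add_apply] at *
            rw [ha, hb, add_zero]
        | smul r a _ ha =>
            simp only [LinearMap.smul_apply] at *
            rw [ha, smul_zero]
      have hsub : xv = yv := by
        refine sub_eq_zero.mp ?_
        refine (Module.forall_dual_apply_eq_zero_iff ℝ _).mp ?_
        intro ψ
        exact hall ψ (by rw [hspan']; trivial)
      have h2 : x.1 = y.1 := congrArg (Subtype.val : V → (Fin n → ℝ)) hsub
      exact Subtype.ext h2
    calc Nat.card S ≤ Nat.card (t → Bool) := Nat.card_le_card_of_injective F hFinj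
      _ = 2 ^ k := by
          rw [Nat.card_eq_fintype_card, Fintype.card_fun, Fintype.card_bool, hcard]
  rw [← Nat.card_coe_set_eq]
  exact key
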